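/- Let σ > 0 and ξ > 0. For every real s with −1 < s < 1/ξ, the moment generating function of the exGPD(σ, ξ) distribution satisfies M(s) = ∫_{−∞}^{∞} e^{sy} (e^y/σ)(1 + ξ e^y/σ)^(−1/ξ − 1) dy = (1/ξ) (σ/ξ)^s · B(s + 1, 1/ξ − s), where B(x, y) = Γ(x)Γ(y)/Γ(x + y) is the Beta function. -/

import Mathlib

open MeasureTheory Set


lemma real_beta (a b : ℝ) (ha : 0 < a) (hb : 0 < b) :
    ∫ x in Ioo (0:ℝ) 1, x ^ (a-1) * (1-x) ^ (b-1) =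
      Real.Gamma a * Real.Gamma b / Real.Gamma (a+b) := by
  have hIoo : (∫ x in Ioo (0:ℝ) 1, x ^ (a-1) * (1-x) ^ (b-1)) =
      ∫ x in (0:ℝ)..1, x ^ (a-1) * (1-x) ^ (b-1) := by
    rw [intervalIntegral.integral_of_le zero_le_one, MeasureTheory.integral_Ioc_eq_integral_Ioo]
  have hcb : Complex.betaIntegral a b =
      ((∫ x in Ioo (0:ℝ) 1, x ^ (a-1) * (1-x) ^ (b-1) : ℝ) : ℂ) := by
    rw [hIoo, Complex.betaIntegral, ← intervalIntegral.integral_ofReal]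
    refine intervalIntegral.integral_congr fun x hx => ?_
    rw [uIcc_of_le zero_le_one] at hx
    have hx0 : (0:ℝ) ≤ x := hx.1
    have hx1 : (0:ℝ) ≤ 1 - x := by linarith [hx.2]
    rw [show ((a:ℂ)-1) = ((a-1:ℝ):ℂ) by push_cast; ring,
      show ((b:ℂ)-1) = ((b-1:ℝ):ℂ) by push_cast; ring,
      show (1 - ((x:ℝ):ℂ)) = ((1-x:ℝ):ℂ) by push_cast; ring,
      ← Complex.ofReal_cpow hx0, ← Complex.ofReal_cpow hx1]
    push_cast
    ring
  have h := Complex.Gamma_mul_Gamma_eq_betaIntegral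
    (s := (a:ℂ)) (t := (b:ℂ)) (by simpa using ha) (by simpa using hb)
  rw [hcb, ← Complex.ofReal_add, Complex.Gamma_ofReal, Complex.Gamma_ofReal,
    Complex.Gamma_ofReal] at h
  have hG : Real.Gamma a * Real.Gamma b =
      Real.Gamma (a+b) * ∫ x in Ioo (0:ℝ) 1, x ^ (a-1) * (1-x) ^ (b-1) := by
    exact_mod_cast h
  have hne : Real.Gamma (a+b) ≠ 0 := (Real.Gamma_pos_of_pos (by linarith)).ne'
  rw [eq_div_iff hne]
  linarith [hG]

lemma image_div_one_sub : (fun x : ℝ => x / (1 - x)) '' Ioo 0 1 = Ioi 0 := by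
  ext u
  constructor
  · rintro ⟨x, ⟨hx0, hx1⟩, rfl⟩
    exact div_pos hx0 (by linarith)
  · intro hu
    refine ⟨u / (1 + u), ⟨div_pos hu (by linarith [mem_Ioi.mp hu]), ?_⟩, ?_⟩
    · rw [div_lt_one (by linarith [mem_Ioi.mp hu])]; linarith [mem_Ioi.mp hu]
    · have h1u : (0:ℝ) < 1 + u := by linarith [mem_Ioi.mp hu]
      field_simp; ring

lemma beta_Ioi (a b : ℝ) (ha : 0 < a) (hb : 0 < b) :
    ∫ u in Ioi (0:ℝ), u ^ (a-1) * (1+u) ^ (-(a+b)) =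
      Real.Gamma a * Real.Gamma b / Real.Gamma (a+b) := by
  have hderiv : ∀ x ∈ Ioo (0:ℝ) 1,
      HasDerivWithinAt (fun x : ℝ => x / (1 - x)) (((1-x)^2)⁻¹) (Ioo 0 1) x := by
    intro x hx
    have hx1 : (1:ℝ) - x ≠ 0 := by have := hx.2; intro h; linarith
    have : HasDerivAt (fun x : ℝ => x / (1 - x))
        ((1 * (1-x) - x * (0 - 1)) / (1-x)^2) x :=
      (hasDerivAt_id x).div ((hasDerivAt_const x (1:ℝ)).sub (hasDerivAt_id x)) hx1
    rw [show ((1-x)^2)⁻¹ = (1 * (1-x) - x * (0 - 1)) / (1-x)^2 by ring]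
    exact this.hasDerivWithinAt
  have hinj : InjOn (fun x : ℝ => x / (1 - x)) (Ioo 0 1) := by
    intro x hx y hy h
    have hx1 : (1:ℝ) - x ≠ 0 := by have := hx.2; intro hc; linarith [(by linarith : x = 1)]
    have hy1 : (1:ℝ) - y ≠ 0 := by have := hy.2; intro hc; linarith [(by linarith : y = 1)]
    have h' : x / (1-x) = y / (1-y) := h
    rw [div_eq_div_iff (by linarith [hx.2] : (0:ℝ) < 1-x).ne' (by linarith [hy.2] : (0:ℝ) < 1-y).ne'] at h'
    ring_nf at h'
    nlinarith
  have key := MeasureTheory.integral_image_eq_integral_abs_deriv_smul measurableSet_Ioo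
    hderiv hinj (fun u => u ^ (a-1) * (1+u) ^ (-(a+b)))
  rw [image_div_one_sub] at key
  rw [key]
  rw [← real_beta a b ha hb]
  refine setIntegral_congr_fun measurableSet_Ioo fun x hx => ?_
  have hx0 : (0:ℝ) < x := hx.1
  have hx1 : (0:ℝ) < 1 - x := by linarith [hx.2]
  have h1 : 1 + x / (1 - x) = (1-x)⁻¹ := by field_simp; ring
  rw [smul_eq_mul, h1, abs_of_pos (by positivity)]
  have key2 : ((1-x)^2)⁻¹ * ((x/(1-x))^(a-1) * ((1-x)⁻¹)^(-(a+b))) =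
      x^(a-1) * ((1-x)^(-2:ℝ) * ((1-x)^(-(a-1)) * (1-x)^(a+b))) := by
    rw [Real.div_rpow hx0.le hx1.le, Real.inv_rpow hx1.le, ← Real.rpow_neg hx1.le, neg_neg,
      div_eq_mul_inv, ← Real.rpow_neg hx1.le, ← Real.rpow_natCast (1-x) 2,
      ← Real.rpow_neg hx1.le]
    push_cast
    ring
  rw [key2, ← Real.rpow_add hx1, ← Real.rpow_add hx1]
  congr 1
  ring

/-- For `σ > 0`, `ξ > 0`, `−1 < s < 1/ξ`, the mgf of exGPD(σ, ξ) is
`M(s) = (1/ξ)(σ/ξ)^s B(s+1, 1/ξ − s)` with `B(x,y) = Γ(x)Γ(y)/Γ(x+y)`. -/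
theorem exGPD_mgf_pos_shape (σ ξ : ℝ) (hσ : 0 < σ) (hξ : 0 < ξ) (s : ℝ)
    (hs₁ : -1 < s) (hs₂ : s < 1 / ξ) :
    ∫ y : ℝ,
        Real.exp (s * y) * ((Real.exp y / σ) * (1 + ξ * Real.exp y / σ) ^ (-1 / ξ - 1)) =
      (1 / ξ) * (σ / ξ) ^ s *
        (Real.Gamma (s + 1) * Real.Gamma (1 / ξ - s) / Real.Gamma (s + 1 + (1 / ξ - s))) := by
  set g : ℝ → ℝ := fun t => t ^ s * (1 / σ) * (1 + ξ * t / σ) ^ (-1 / ξ - 1) with hg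
  -- Step 1: substitute t = exp y
  have hderiv : ∀ y ∈ (univ : Set ℝ),
      HasDerivWithinAt Real.exp (Real.exp y) univ y :=
    fun y _ => (Real.hasDerivAt_exp y).hasDerivWithinAt
  have key := MeasureTheory.integral_image_eq_integral_abs_deriv_smul MeasurableSet.univ
    hderiv (Real.exp_injective.injOn) g
  rw [Set.image_univ, Real.range_exp, MeasureTheory.setIntegral_univ] at key
  have e1 : (∫ y : ℝ,
        Real.exp (s * y) * ((Real.exp y / σ) * (1 + ξ * Real.exp y / σ) ^ (-1 / ξ - 1))) =
      ∫ t in Ioi (0:ℝ), g t := by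
    rw [key]
    refine MeasureTheory.integral_congr_ae (Filter.Eventually.of_forall fun y => ?_)
    simp only [hg, smul_eq_mul, abs_of_pos (Real.exp_pos y)]
    rw [show Real.exp y ^ s = Real.exp (s * y) by
      rw [mul_comm, Real.exp_mul]]
    field_simp
  -- Step 2: scale t = (σ/ξ) u
  set G : ℝ → ℝ := fun u => (σ * u / ξ) ^ s * (1 / σ) * (1 + u) ^ (-1 / ξ - 1) with hG
  have e2 : (∫ t in Ioi (0:ℝ), g t) = (ξ / σ)⁻¹ • ∫ u in Ioi (0:ℝ), G u := by
    have hb : 0 < ξ / σ := div_pos hξ hσ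
    have := MeasureTheory.integral_comp_mul_left_Ioi G 0 hb
    rw [mul_zero] at this
    rw [← this]
    refine MeasureTheory.setIntegral_congr_fun measurableSet_Ioi fun t ht => ?_
    rw [hg, hG]
    have h1 : σ * (ξ / σ * t) / ξ = t := by field_simp
    have h2 : 1 + ξ / σ * t = 1 + ξ * t / σ := by ring
    simp only [h1, h2]
  -- Step 3: pull constants out of G
  have e3 : (∫ u in Ioi (0:ℝ), G u) =
      ((σ / ξ) ^ s * (1 / σ)) * ∫ u in Ioi (0:ℝ), u ^ ((s+1)-1) * (1+u) ^ (-((s+1)+(1/ξ-s))) := by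
    rw [← MeasureTheory.integral_const_mul]
    refine MeasureTheory.setIntegral_congr_fun measurableSet_Ioi fun u hu => ?_
    have hu0 : (0:ℝ) < u := hu
    simp only [hG]
    have h3 : σ * u / ξ = (σ / ξ) * u := by ring
    rw [h3, Real.mul_rpow (by positivity) hu0.le]
    have h4 : -((s+1)+(1/ξ-s)) = -1/ξ - 1 := by ring
    rw [h4]
    ring_nf
  have e4 := beta_Ioi (s+1) (1/ξ - s) (by linarith) (by linarith)
  rw [e1, e2, e3, e4, smul_eq_mul, inv_div]
  have hc : σ / ξ * (1 / σ) = 1 / ξ := by field_simp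
  set B := Real.Gamma (s + 1) * Real.Gamma (1 / ξ - s) / Real.Gamma (s + 1 + (1 / ξ - s))
  linear_combination ((σ / ξ) ^ s * B) * hc
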